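/- For the forward-diagonal interconnection M_F := P_F^{-1}(M_0 ⊗ I_{N_0})P_F with M_0 symmetric circulant (coefficients m_q) and N_0 odd, the eigenvalue corresponding to the (m,n)-th DFT mode w_m ⊗ w_n is m_0 + 2 Σ_{q=1}^{(N_0-1)/2} m_q cos(2πq(n-m)/N_0). -/

import Mathlib

open Matrix Kronecker

theorem stmt15 (N0 : ℕ) [NeZero N0] (hN : 3 ≤ N0) (hodd : Odd N0)
    (c : Fin N0 → ℂ) (M0 P : Matrix (Fin N0) (Fin N0) ℂ)
    (PF : Matrix (Fin N0 × Fin N0) (Fin N0 × Fin N0) ℂ)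
    (hM : ∀ i j : Fin N0, M0 i j = c (i - j))
    (hsym : ∀ q : Fin N0, c q = c (-q))
    (hP : ∀ i j : Fin N0, P i j = if i = j + 1 then 1 else 0)
    (hPF : ∀ k i l j : Fin N0, PF (k, i) (l, j) = if k = l then (P ^ (k : ℕ)) i j else 0)
    (m n : Fin N0) :
    (PF⁻¹ * (M0 ⊗ₖ (1 : Matrix (Fin N0) (Fin N0) ℂ)) * PF).mulVec
      (fun p : Fin N0 × Fin N0 =>
        Complex.exp (2 * Real.pi * Complex.I * (p.1 : ℕ) * (m : ℕ) / N0) *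
        Complex.exp (2 * Real.pi * Complex.I * (p.2 : ℕ) * (n : ℕ) / N0)) =
    (c 0 + 2 * ∑ q ∈ Finset.Icc 1 ((N0 - 1) / 2),
        c (Fin.ofNat N0 q) *
          Complex.cos (2 * Real.pi * q * (((n : ℕ) : ℝ) - ((m : ℕ) : ℝ)) / N0)) •
      (fun p : Fin N0 × Fin N0 =>
        Complex.exp (2 * Real.pi * Complex.I * (p.1 : ℕ) * (m : ℕ) / N0) *
        Complex.exp (2 * Real.pi * Complex.I * (p.2 : ℕ) * (n : ℕ) / N0)) := by
  have hN0 : (0:ℕ) < N0 := Nat.pos_of_ne_zero (NeZero.ne N0)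
  set ζ : ℂ := Complex.exp (2 * Real.pi * Complex.I / N0) with hζdef
  have hN0C : (N0:ℂ) ≠ 0 := by exact_mod_cast Nat.cast_ne_zero.mpr (NeZero.ne N0)
  have hζ0 : ζ ≠ 0 := Complex.exp_ne_zero _
  have hζN : ζ ^ N0 = 1 := by
    rw [hζdef, ← Complex.exp_nat_mul,
      show (N0:ℂ) * (2 * Real.pi * Complex.I / N0) = 2 * Real.pi * Complex.I by
        field_simp]
    exact Complex.exp_two_pi_mul_I
  have hmod : ∀ a : ℕ, ζ ^ (a % N0) = ζ ^ a := by
    intro a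
    conv_rhs => rw [← Nat.div_add_mod a N0]
    rw [pow_add, pow_mul, hζN, one_pow, one_mul]
  -- the basic character
  set χ : Fin N0 → ℂ := fun x => ζ ^ (x:ℕ) with hχdef
  have hχadd : ∀ x y : Fin N0, χ (x + y) = χ x * χ y := by
    intro x y
    simp only [hχdef, Fin.val_add, hmod, pow_add]
  have hχ0 : χ 0 = 1 := by simp [hχdef]
  have hχneg : ∀ x : Fin N0, χ (-x) = (χ x)⁻¹ := by
    intro x
    have h := hχadd x (-x)
    rw [add_neg_cancel, hχ0] at h
    exact eq_inv_of_mul_eq_one_left (by rw [mul_comm, ← h])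
  have hχne : ∀ x : Fin N0, χ x ≠ 0 := fun x => pow_ne_zero _ hζ0
  -- the eigenvector in terms of ζ
  have hexp : ∀ a b : ℕ, Complex.exp (2 * Real.pi * Complex.I * a * b / N0) = ζ ^ (a * b) := by
    intro a b
    rw [hζdef, ← Complex.exp_nat_mul]
    congr 1
    push_cast
    ring
  -- powers of P
  open Fin.NatCast in
  have hPpow : ∀ (t : ℕ) (i j : Fin N0), (P ^ t) i j = if i = j + (t : Fin N0) then 1 else 0 := by
    intro t
    induction t with
    | zero => intro i j; simp [Matrix.one_apply]
    | succ t ih =>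
      intro i j
      rw [pow_succ, Matrix.mul_apply]
      rw [Finset.sum_eq_single (j + 1)]
      · have h2 : j + ((t+1:ℕ):Fin N0) = j + 1 + (t:Fin N0) := by push_cast; abel
        rw [ih, hP, if_pos rfl, mul_one, h2]
      · intro b _ hb
        rw [hP, if_neg hb, mul_zero]
      · intro h; exact absurd (Finset.mem_univ _) h
  -- the inverse of PF
  set Q : Matrix (Fin N0 × Fin N0) (Fin N0 × Fin N0) ℂ :=
    fun p p' => if p.1 = p'.1 then (if p'.2 = p.2 + p.1 then 1 else 0) else 0 with hQdef
  have hQPF : Q * PF = 1 := by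
    ext ⟨k, i⟩ ⟨l, j⟩
    rw [Matrix.mul_apply]
    rw [Fintype.sum_prod_type]
    simp only [hQdef, hPF, hPpow, Matrix.one_apply, Prod.mk.injEq]
    simp only [Finset.sum_ite_eq, Finset.sum_ite_eq', ite_and, Finset.mem_univ, if_pos]
    rcases eq_or_ne k l with h|h
    · subst h; simp [add_left_inj, eq_comm]
    · simp [h]
  have hinv : PF⁻¹ = Q := Matrix.inv_eq_left_inv hQPF
  -- the eigenvector
  set v : Fin N0 × Fin N0 → ℂ := fun p =>
    Complex.exp (2 * Real.pi * Complex.I * (p.1 : ℕ) * (m : ℕ) / N0) *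
    Complex.exp (2 * Real.pi * Complex.I * (p.2 : ℕ) * (n : ℕ) / N0) with hvdef
  have hv : ∀ p : Fin N0 × Fin N0, v p = χ p.1 ^ (m:ℕ) * χ p.2 ^ (n:ℕ) := by
    intro p
    rw [hvdef]
    simp only [hexp, hχdef, pow_mul]
  -- step 1 : PF *ᵥ v
  have h1 : PF *ᵥ v = fun p => χ p.1 ^ (m:ℕ) * χ (p.2 - p.1) ^ (n:ℕ) := by
    funext lj
    obtain ⟨l, j⟩ := lj
    show ∑ p' : Fin N0 × Fin N0, PF (l, j) p' * v p' = _
    rw [Fintype.sum_prod_type]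
    have hterm : ∀ l' j' : Fin N0, PF (l, j) (l', j') * v (l', j') =
        if l = l' then (if j = j' + l then (1:ℂ) else 0) * v (l', j') else 0 := by
      intro l' j'
      rw [hPF, hPpow]
      split
      · next h => subst h; rw [Fin.cast_val_eq_self]
      · rw [zero_mul]
    simp_rw [hterm]
    rw [Finset.sum_comm]
    rw [show (∑ j' : Fin N0, ∑ l' : Fin N0,
        if l = l' then (if j = j' + l then (1:ℂ) else 0) * v (l', j') else 0)
      = ∑ j' : Fin N0, (if j = j' + l then (1:ℂ) else 0) * v (l, j') from
      Finset.sum_congr rfl fun j' _ => by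
        rw [Finset.sum_ite_eq, if_pos (Finset.mem_univ l)]]
    rw [Finset.sum_eq_single (j - l)]
    · rw [if_pos (show j = j - l + l by rw [sub_add_cancel]), one_mul, hv]
    · intro b _ hb
      rw [if_neg, zero_mul]
      intro h
      exact hb (show b = j - l by rw [h, add_sub_cancel_right])
    · intro h; exact absurd (Finset.mem_univ _) h
  -- step 2 : kronecker product application
  have h2 : (M0 ⊗ₖ (1 : Matrix (Fin N0) (Fin N0) ℂ)) *ᵥ (PF *ᵥ v) =
      fun p => ∑ l : Fin N0, c (p.1 - l) * (χ l ^ (m:ℕ) * χ (p.2 - l) ^ (n:ℕ)) := by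
    rw [h1]
    funext ki
    obtain ⟨k, i⟩ := ki
    show ∑ p' : Fin N0 × Fin N0, (M0 ⊗ₖ (1 : Matrix (Fin N0) (Fin N0) ℂ)) (k, i) p' *
        (χ p'.1 ^ (m:ℕ) * χ (p'.2 - p'.1) ^ (n:ℕ)) = _
    rw [Fintype.sum_prod_type]
    simp only [Matrix.kroneckerMap_apply, Matrix.one_apply, hM]
    simp [mul_ite, ite_mul, mul_zero, zero_mul, mul_one, Finset.sum_ite_eq, mul_assoc]
  -- step 3 : apply Q
  have h3 : ∀ (u : Fin N0 × Fin N0 → ℂ) (k i : Fin N0), (Q *ᵥ u) (k, i) = u (k, i + k) := by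
    intro u k i
    show ∑ p' : Fin N0 × Fin N0, Q (k, i) p' * u p' = _
    rw [Fintype.sum_prod_type]
    simp only [hQdef]
    simp [ite_mul, zero_mul, one_mul, Finset.sum_ite_eq, Finset.sum_ite_eq']
  -- the scalar sum
  set S : ℂ := ∑ q : Fin N0, c q * (χ q ^ (n:ℕ) * (χ q ^ (m:ℕ))⁻¹) with hSdef
  -- main pointwise identity
  rw [← Matrix.mulVec_mulVec, ← Matrix.mulVec_mulVec, hinv, h2]
  have hmain : ∀ k i : Fin N0,
      (∑ l : Fin N0, c (k - l) * (χ l ^ (m:ℕ) * χ (i + k - l) ^ (n:ℕ))) =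
      S * (χ k ^ (m:ℕ) * χ i ^ (n:ℕ)) := by
    intro k i
    rw [hSdef, Finset.sum_mul]
    rw [← Equiv.sum_comp (Equiv.subLeft k)
      (fun l => c (k - l) * (χ l ^ (m:ℕ) * χ (i + k - l) ^ (n:ℕ)))]
    apply Finset.sum_congr rfl
    intro q _
    have e0 : Equiv.subLeft k q = k - q := rfl
    have e1 : k - (k - q) = q := by abel
    have e2 : i + k - (k - q) = i + q := by abel
    rw [e0, e1, e2]
    have e3 : χ (k - q) = χ k * (χ q)⁻¹ := by
      rw [sub_eq_add_neg, hχadd, hχneg]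
    have e4 : χ (i + q) = χ i * χ q := hχadd i q
    rw [e3, e4, mul_pow, mul_pow, inv_pow]
    field_simp
  -- now evaluate S
  set K : ℕ := (N0 - 1) / 2 with hKdef
  obtain ⟨K', hK'⟩ := hodd
  have hK : N0 = 2 * K + 1 := by omega
  open Fin.NatCast in
  set F : ℕ → ℂ := fun q => c (q : Fin N0) * (ζ ^ (q * (n:ℕ)) * (ζ ^ (q * (m:ℕ)))⁻¹)
    with hFdef
  have hSF : S = ∑ q ∈ Finset.range N0, F q := by
    rw [hSdef, ← Fin.sum_univ_eq_sum_range]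
    apply Finset.sum_congr rfl
    intro q _
    rw [hFdef]
    simp only [hχdef, Fin.cast_val_eq_self, pow_mul]
  have hsplit : Finset.range N0 = insert 0 (Finset.Icc 1 K ∪ Finset.Icc (K+1) (2*K)) := by
    ext x
    simp only [Finset.mem_range, Finset.mem_insert, Finset.mem_union, Finset.mem_Icc]
    omega
  have hd1 : (0:ℕ) ∉ Finset.Icc 1 K ∪ Finset.Icc (K+1) (2*K) := by
    simp only [Finset.mem_union, Finset.mem_Icc]
    omega
  have hd2 : Disjoint (Finset.Icc 1 K) (Finset.Icc (K+1) (2*K)) := by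
    rw [Finset.disjoint_left]
    intro a ha hb
    simp only [Finset.mem_Icc] at ha hb
    omega
  open Fin.NatCast in
  have hFinv : ∀ q : ℕ, 1 ≤ q → q ≤ 2*K →
      F (N0 - q) = c (q : Fin N0) * ((ζ ^ (q * (n:ℕ)))⁻¹ * ζ ^ (q * (m:ℕ))) := by
    intro q hq1 hq2
    have hq : q ≤ N0 := by omega
    have hcast : ((N0 - q : ℕ) : Fin N0) = -((q:ℕ) : Fin N0) := by
      apply eq_neg_of_add_eq_zero_left
      rw [← Nat.cast_add, Nat.sub_add_cancel hq, Fin.natCast_self]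
    have hpow : ∀ b : ℕ, ζ ^ ((N0 - q) * b) = (ζ ^ (q * b))⁻¹ := by
      intro b
      apply eq_inv_of_mul_eq_one_left
      rw [← pow_add, ← add_mul, Nat.sub_add_cancel hq, pow_mul, hζN, one_pow]
    rw [hFdef]
    simp only [hcast, hpow, inv_inv]
    rw [← hsym]
  have hcos : ∀ q : ℕ,
      ζ ^ (q * (n:ℕ)) * (ζ ^ (q * (m:ℕ)))⁻¹ + (ζ ^ (q * (n:ℕ)))⁻¹ * ζ ^ (q * (m:ℕ))
        = 2 * Complex.cos (2 * Real.pi * q * (((n:ℕ):ℝ) - ((m:ℕ):ℝ)) / N0) := by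
    intro q
    have hz : ζ ^ (q * (n:ℕ)) * (ζ ^ (q * (m:ℕ)))⁻¹
        = Complex.exp (2*Real.pi*Complex.I*q*(n:ℕ)/N0 - 2*Real.pi*Complex.I*q*(m:ℕ)/N0) := by
      rw [← hexp q (n:ℕ), ← hexp q (m:ℕ), Complex.exp_sub]
      exact (div_eq_mul_inv _ _).symm
    have hz' : (ζ ^ (q * (n:ℕ)))⁻¹ * ζ ^ (q * (m:ℕ))
        = Complex.exp (-(2*Real.pi*Complex.I*q*(n:ℕ)/N0 - 2*Real.pi*Complex.I*q*(m:ℕ)/N0)) := by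
      rw [← hexp q (n:ℕ), ← hexp q (m:ℕ), neg_sub, Complex.exp_sub]
      exact inv_mul_eq_div _ _
    rw [hz, hz']
    simp only [Complex.cos]
    rw [mul_div_cancel₀ _ (two_ne_zero)]
    congr 2
    · push_cast; ring
    · push_cast; ring
  open Fin.NatCast in
  have hS : S = c 0 + 2 * ∑ q ∈ Finset.Icc 1 K,
      c (q : Fin N0) * Complex.cos (2 * Real.pi * q * (((n:ℕ):ℝ) - ((m:ℕ):ℝ)) / N0) := by
    rw [hSF, hsplit, Finset.sum_insert hd1, Finset.sum_union hd2]
    have hF0 : F 0 = c 0 := by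
      rw [hFdef]
      norm_num
    have hmirror : ∑ q ∈ Finset.Icc (K+1) (2*K), F q = ∑ q ∈ Finset.Icc 1 K, F (N0 - q) := by
      apply Finset.sum_nbij' (fun q => N0 - q) (fun q => N0 - q)
      · intro a ha; simp only [Finset.mem_Icc] at *; omega
      · intro a ha; simp only [Finset.mem_Icc] at *; omega
      · intro a ha; simp only [Finset.mem_Icc] at ha; omega
      · intro a ha; simp only [Finset.mem_Icc] at ha; omega
      · intro a ha
        simp only [Finset.mem_Icc] at ha
        congr 1
        omega
    rw [hF0, hmirror, ← Finset.sum_add_distrib, Finset.mul_sum]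
    congr 1
    apply Finset.sum_congr rfl
    intro q hq
    simp only [Finset.mem_Icc] at hq
    rw [hFinv q hq.1 (by omega), hFdef]
    simp only []
    rw [← mul_add, hcos q]
    ring
  -- finish
  funext p
  obtain ⟨k, i⟩ := p
  rw [h3, hmain k i, Pi.smul_apply, smul_eq_mul, hv, hS]
  rfl
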